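/- Every ray attainable from the Yu–Oh states by a finite sequence of Lüders measurements of Yu–Oh projectors remains orthogonal to at least one Yu–Oh vector: for every n : ℕ and every L ∈ Sₙ there exists i : Fin 13 such that ⟪v i, w⟫ = 0 for all w ∈ L. -/

import Mathlib

open scoped InnerProductSpace

noncomputable def v : Fin 13 → EuclideanSpace ℂ (Fin 3) :=
  ![!₂[1, 0, 0], !₂[0, 1, 0], !₂[0, 0, 1],
    !₂[0, 1, -1], !₂[0, 1, 1], !₂[1, 0, -1], !₂[1, 0, 1], !₂[1, -1, 0], !₂[1, 1, 0],
    !₂[1, 1, 1], !₂[-1, 1, 1], !₂[1, -1, 1], !₂[1, 1, -1]]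

noncomputable def P (i : Fin 13) (w : EuclideanSpace ℂ (Fin 3)) : EuclideanSpace ℂ (Fin 3) :=
  (Submodule.orthogonalProjectionOnto (Submodule.span ℂ {v i}) w : EuclideanSpace ℂ (Fin 3))

noncomputable def S : ℕ → Set (Submodule ℂ (EuclideanSpace ℂ (Fin 3)))
  | 0 => {L | ∃ i : Fin 13, L = Submodule.span ℂ {v i}}
  | (n + 1) => {L | ∃ L' ∈ S n, ∃ w ∈ L', w ≠ 0 ∧ ∃ i : Fin 13,
      (P i w ≠ 0 ∧ L = Submodule.span ℂ {P i w}) ∨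
      (w - P i w ≠ 0 ∧ L = Submodule.span ℂ {w - P i w})}

lemma exists_orth (i : Fin 13) : ∃ j : Fin 13, ⟪v j, v i⟫_ℂ = 0 := by
  fin_cases i
  · exact ⟨1, by norm_num [v, PiLp.inner_apply, Fin.sum_univ_three, Matrix.cons_val_two]⟩
  · exact ⟨0, by norm_num [v, PiLp.inner_apply, Fin.sum_univ_three, Matrix.cons_val_two]⟩
  · exact ⟨0, by norm_num [v, PiLp.inner_apply, Fin.sum_univ_three, Matrix.cons_val_two]⟩
  · exact ⟨0, by norm_num [v, PiLp.inner_apply, Fin.sum_univ_three, Matrix.cons_val_two]⟩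
  · exact ⟨0, by norm_num [v, PiLp.inner_apply, Fin.sum_univ_three, Matrix.cons_val_two]⟩
  · exact ⟨1, by norm_num [v, PiLp.inner_apply, Fin.sum_univ_three, Matrix.cons_val_two]⟩
  · exact ⟨1, by norm_num [v, PiLp.inner_apply, Fin.sum_univ_three, Matrix.cons_val_two]⟩
  · exact ⟨2, by norm_num [v, PiLp.inner_apply, Fin.sum_univ_three, Matrix.cons_val_two]⟩
  · exact ⟨2, by norm_num [v, PiLp.inner_apply, Fin.sum_univ_three, Matrix.cons_val_two]⟩
  · exact ⟨3, by norm_num [v, PiLp.inner_apply, Fin.sum_univ_three, Matrix.cons_val_two, Matrix.cons_val_three, Matrix.cons_val_four]⟩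
  · exact ⟨3, by norm_num [v, PiLp.inner_apply, Fin.sum_univ_three, Matrix.cons_val_two, Matrix.cons_val_three, Matrix.cons_val_four]⟩
  · exact ⟨4, by norm_num [v, PiLp.inner_apply, Fin.sum_univ_three, Matrix.cons_val_two, Matrix.cons_val_three, Matrix.cons_val_four]⟩
  · exact ⟨4, by norm_num [v, PiLp.inner_apply, Fin.sum_univ_three, Matrix.cons_val_two, Matrix.cons_val_three, Matrix.cons_val_four]⟩

lemma span_orth {j : Fin 13} {x : EuclideanSpace ℂ (Fin 3)} (h : ⟪v j, x⟫_ℂ = 0) :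
    ∀ w ∈ Submodule.span ℂ {x}, ⟪v j, w⟫_ℂ = 0 := by
  intro w hw
  obtain ⟨c, rfl⟩ := Submodule.mem_span_singleton.mp hw
  rw [inner_smul_right, h, mul_zero]

theorem attainable_rays_orthogonal_to_some_yu_oh_vector :
    ∀ n : ℕ, ∀ L ∈ S n, ∃ i : Fin 13, ∀ w ∈ L, ⟪v i, w⟫_ℂ = 0 := by
  intro n
  induction n with
  | zero =>
    rintro L ⟨i, rfl⟩
    obtain ⟨j, hj⟩ := exists_orth i
    exact ⟨j, span_orth hj⟩
  | succ n ih =>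
    rintro L ⟨L', hL', w, hw, hw0, i, hcase⟩
    rcases hcase with ⟨-, rfl⟩ | ⟨-, rfl⟩
    · obtain ⟨j, hj⟩ := exists_orth i
      refine ⟨j, span_orth ?_⟩
      have hmem : P i w ∈ Submodule.span ℂ {v i} :=
        (Submodule.orthogonalProjectionOnto (Submodule.span ℂ {v i}) w).2
      exact span_orth hj _ hmem
    · refine ⟨i, span_orth ?_⟩
      have h := Submodule.sub_starProjection_mem_orthogonal (K := Submodule.span ℂ {v i}) w
      exact (Submodule.mem_orthogonal _ _).mp h (v i) (Submodule.mem_span_singleton_self _)
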